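/- Consider the multi-industry clearing system: finite sets I (banks) and K (industries), β > 0, nonnegative weights π_{ik} and p_{ki}, and industry values M_k ≥ 0. Suppose x ∈ ℝ^I satisfies s_i = x_i + Σ_{k∈K} (1 − exp(−β·Σ_{j∈I} x_j·π_{jk}))·M_k·p_{ki} for every i ∈ I, and suppose the aggregate fire-sale exposure is nonnegative in every industry: Σ_{j∈I} x_j·π_{jk} ≥ 0 for all k ∈ K. Then every bank p with s_p < 0 satisfies x_p < 0. In particular, if s_p = (1/θ̄)·(θ̄·A_p − E_p + (1−θ̄)·ε·A_p) with A_p > 0, 0 < E_p < A_p, 0 < θ̄ < 1, and ε < (E_p/A_p − θ̄)/(1−θ̄), then x_p < 0, so at least one component of x is negative. -/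

import Mathlib

/-- Proposition 1(b): in the multi-industry clearing system with nonnegative
aggregate fire-sale exposure in every industry, every bank with negative
liquidation demand engages in credit creation (`x_p < 0`); in particular a
bank with leverage-based demand under a moderate shock
`ε < (E_p/A_p − θ̄)/(1−θ̄)` has `x_p < 0`. -/
theorem moderate_shock_credit_creation
    {I K : Type*} [Fintype I] [Fintype K] (β : ℝ) (hβ : 0 < β)
    (π : I → K → ℝ) (hπ : ∀ i k, 0 ≤ π i k)
    (p : K → I → ℝ) (hp : ∀ k i, 0 ≤ p k i)
    (M : K → ℝ) (hM : ∀ k, 0 ≤ M k)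
    (s x : I → ℝ)
    (hx : ∀ i, s i = x i +
      ∑ k, (1 - Real.exp (-β * ∑ j, x j * π j k)) * M k * p k i)
    (hexp : ∀ k, 0 ≤ ∑ j, x j * π j k) :
    (∀ i : I, s i < 0 → x i < 0) ∧
    (∀ (i : I) (A E θbar ε : ℝ), 0 < A → 0 < E → E < A →
      0 < θbar → θbar < 1 →
      ε < (E / A - θbar) / (1 - θbar) →
      s i = (1 / θbar) * (θbar * A - E + (1 - θbar) * ε * A) →
      x i < 0) := by
  have key : ∀ i : I, s i < 0 → x i < 0 := by
    intro i hsi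
    have hsum : 0 ≤ ∑ k, (1 - Real.exp (-β * ∑ j, x j * π j k)) * M k * p k i := by
      apply Finset.sum_nonneg
      intro k _
      have h1 : Real.exp (-β * ∑ j, x j * π j k) ≤ 1 := by
        rw [show (1 : ℝ) = Real.exp 0 by simp]
        apply Real.exp_le_exp.mpr
        have := hexp k
        nlinarith [hβ]
      have h2 : 0 ≤ 1 - Real.exp (-β * ∑ j, x j * π j k) := by linarith
      exact mul_nonneg (mul_nonneg h2 (hM k)) (hp k i)
    have := hx i
    linarith
  refine ⟨key, fun i A E θbar ε hA hE hEA hθ hθ1 hε hs => ?_⟩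
  apply key
  rw [hs]
  have h1θ : 0 < 1 - θbar := by linarith
  have hεA : (1 - θbar) * ε < E / A - θbar := by
    have := (lt_div_iff₀ h1θ).mp hε
    linarith
  have : θbar * A - E + (1 - θbar) * ε * A < 0 := by
    have h2 : (1 - θbar) * ε * A < (E / A - θbar) * A := by
      exact mul_lt_mul_of_pos_right hεA hA
    have h3 : (E / A - θbar) * A = E - θbar * A := by
      field_simp
    linarith
  have hθi : 0 < 1 / θbar := by positivity
  nlinarith
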